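/- The double integral ∫₀^π ∫₀^π (1/π²) · ln(4 sin²(q₁/2) + 4 sin²(q₂/2)) dq₁ dq₂ equals 4G/π, where G = Σ_{k=0}^∞ (−1)^k/(2k+1)² is Catalan's constant. -/

import Mathlib

open MeasureTheory Real intervalIntegral Filter Finset

/-- Catalan's constant `G = Σ_{k≥0} (−1)^k/(2k+1)²`. -/
noncomputable def catalan' : ℝ := ∑' k : ℕ, (-1 : ℝ) ^ k / (2 * (k : ℝ) + 1) ^ 2


lemma hasSum_log_poisson {c : ℝ} (hc0 : 0 ≤ c) (hc : c < 1) (q : ℝ) :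
    HasSum (fun n : ℕ => -2 * (c ^ n * Real.cos (n * q) / n))
      (Real.log (1 - 2 * c * Real.cos q + c ^ 2)) := by
  set z : ℂ := c * Complex.exp (q * Complex.I) with hz
  have hznorm : ‖z‖ < 1 := by
    rw [hz, norm_mul]
    simp only [Complex.norm_exp_ofReal_mul_I, mul_one,
      Complex.norm_real, Real.norm_eq_abs, abs_of_nonneg hc0]
    exact hc
  have h2 := Complex.reCLM.hasSum (Complex.hasSum_taylorSeries_neg_log hznorm)
  have hzn : ∀ n : ℕ, Complex.reCLM (z ^ n / n) = c ^ n * Real.cos (n * q) / n := by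
    intro n
    have h3 : z ^ n / n = ((c ^ n / n : ℝ) : ℂ) * Complex.exp ((n * q : ℝ) * Complex.I) := by
      rw [hz, mul_pow, ← Complex.exp_nat_mul]
      push_cast
      ring
    rw [Complex.reCLM_apply, h3, Complex.re_ofReal_mul, Complex.exp_ofReal_mul_I_re]
    ring
  have habs : ‖1 - z‖ ^ 2 = 1 - 2 * c * Real.cos q + c ^ 2 := by
    rw [Complex.sq_norm, Complex.normSq_apply]
    have hre : (1 - z).re = 1 - c * Real.cos q := by
      simp [hz, Complex.exp_ofReal_mul_I_re]
    have him : (1 - z).im = -(c * Real.sin q) := by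
      simp [hz, Complex.exp_ofReal_mul_I_im]
    rw [hre, him]
    have := Real.sin_sq_add_cos_sq q
    nlinarith [this]
  have h4 : HasSum (fun n : ℕ => c ^ n * Real.cos (n * q) / n)
      (-(Real.log ‖1 - z‖)) := by
    have : Complex.reCLM (-(Complex.log (1 - z))) = -(Real.log ‖1 - z‖) := by
      simp [Complex.log_re]
    rw [← this]
    exact h2.congr_fun fun n => (hzn n).symm
  have h5 := h4.mul_left (-2)
  suffices hsuf : Real.log (1 - 2 * c * Real.cos q + c ^ 2) = -2 * -Real.log ‖1 - z‖ by
    rw [hsuf]; exact h5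
  have habs0 : (0:ℝ) < ‖1 - z‖ := by
    have : z ≠ 1 := by
      intro h
      rw [h] at hznorm
      simp at hznorm
    simpa [sub_ne_zero] using (norm_pos_iff.mpr (sub_ne_zero.mpr (Ne.symm this)))
  rw [← habs, Real.log_pow]
  push_cast
  ring

lemma integral_cos_nat_mul {k : ℕ} (hk : 0 < k) :
    ∫ q in (0:ℝ)..Real.pi, Real.cos (k * q) = 0 := by
  have hk' : (k:ℝ) ≠ 0 := Nat.cast_ne_zero.mpr hk.ne'
  have hd : ∀ x ∈ Set.uIcc (0:ℝ) Real.pi, HasDerivAt (fun x => Real.sin (k * x) / k)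
      (Real.cos (k * x)) x := by
    intro x _
    have h1 : HasDerivAt (fun x : ℝ => Real.sin ((k:ℝ) * x)) (Real.cos ((k:ℝ) * x) * k) x := by
      have := ((hasDerivAt_id x).const_mul (k:ℝ)).sin
      simpa using this
    have := h1.div_const (k:ℝ)
    simpa [mul_div_assoc, mul_div_cancel_right₀ _ hk'] using this
  rw [intervalIntegral.integral_eq_sub_of_hasDerivAt hd
      (by apply Continuous.intervalIntegrable; continuity)]
  simp [Real.sin_nat_mul_pi]

lemma sum_geom_le {c : ℝ} (hc0 : 0 ≤ c) (hc : c < 1) (n : ℕ) :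
    ∑ k ∈ Finset.range n, c ^ k ≤ (1 - c)⁻¹ := by
  rw [geom_sum_eq (by linarith) n, div_le_iff_of_neg (by linarith : c - 1 < 0)]
  have h2 : (1 - c)⁻¹ * (1 - c) = 1 := inv_mul_cancel₀ (by intro h; rw [sub_eq_zero] at h; linarith)
  have h3 : 0 ≤ c ^ n := pow_nonneg hc0 n
  nlinarith

lemma integral_log_poisson {c : ℝ} (hc0 : 0 ≤ c) (hc : c < 1) :
    ∫ q in (0:ℝ)..Real.pi, Real.log (1 - 2 * c * Real.cos q + c ^ 2) = 0 := by
  set S : ℕ → ℝ → ℝ := fun n q => ∑ k ∈ Finset.range n, -2 * (c ^ k * Real.cos (k * q) / k)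
    with hS
  have key : Tendsto (fun n => ∫ q in (0:ℝ)..Real.pi, S n q) atTop
      (nhds (∫ q in (0:ℝ)..Real.pi, Real.log (1 - 2 * c * Real.cos q + c ^ 2))) := by
    apply intervalIntegral.tendsto_integral_filter_of_dominated_convergence
        (fun _ => 2 * (1 - c)⁻¹)
    · filter_upwards with n
      apply Continuous.aestronglyMeasurable
      continuity
    · filter_upwards with n
      filter_upwards with q _
      have h1 : |S n q| ≤ ∑ k ∈ Finset.range n, 2 * c ^ k := by
        refine (Finset.abs_sum_le_sum_abs _ _).trans (Finset.sum_le_sum fun k _ => ?_)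
        rcases Nat.eq_zero_or_pos k with hk | hk
        · simp [hk]
        · have hk1 : (1:ℝ) ≤ k := by exact_mod_cast hk
          have hcos : |Real.cos (k * q)| ≤ 1 := Real.abs_cos_le_one _
          have hck : (0:ℝ) ≤ c ^ k := pow_nonneg hc0 k
          rw [abs_mul, abs_div, abs_mul, abs_pow, abs_of_nonneg hc0, Nat.abs_cast]
          have hkpos : (0:ℝ) < k := by linarith
          have hle : c ^ k * |Real.cos (k * q)| / k ≤ c ^ k := by
            rw [div_le_iff₀ hkpos]
            nlinarith
          have habs2 : |(-2:ℝ)| = 2 := by norm_num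
          rw [habs2]
          linarith
      calc ‖S n q‖ ≤ ∑ k ∈ Finset.range n, 2 * c ^ k := by rwa [Real.norm_eq_abs]
        _ = 2 * ∑ k ∈ Finset.range n, c ^ k := by rw [Finset.mul_sum]
        _ ≤ 2 * (1 - c)⁻¹ := by
            have := sum_geom_le hc0 hc n
            linarith
    · apply Continuous.intervalIntegrable; continuity
    · filter_upwards with q _
      exact (hasSum_log_poisson hc0 hc q).tendsto_sum_nat
  have hzero : ∀ n, ∫ q in (0:ℝ)..Real.pi, S n q = 0 := by
    intro n
    rw [hS]
    simp only
    rw [intervalIntegral.integral_finset_sum (fun k _ => by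
      apply Continuous.intervalIntegrable; continuity)]
    refine Finset.sum_eq_zero fun k _ => ?_
    rcases Nat.eq_zero_or_pos k with hk | hk
    · simp [hk]
    · simp_rw [show ∀ q : ℝ, -2 * (c ^ k * Real.cos (k * q) / k)
          = (-2 * c ^ k / (k:ℝ)) * Real.cos (k * q) from fun q => by ring]
      rw [intervalIntegral.integral_const_mul, integral_cos_nat_mul hk, mul_zero]
  simp only [hzero] at key
  exact tendsto_nhds_unique key tendsto_const_nhds

lemma integral_log_two_mul_sub_cos {a : ℝ} (ha : 1 < a) :
    ∫ q in (0:ℝ)..Real.pi, Real.log (2 * (a - Real.cos q))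
      = Real.pi * Real.log (a + Real.sqrt (a ^ 2 - 1)) := by
  set r : ℝ := Real.sqrt (a ^ 2 - 1) with hr
  have hr0 : 0 ≤ r := Real.sqrt_nonneg _
  have hr2 : r ^ 2 = a ^ 2 - 1 := Real.sq_sqrt (by nlinarith)
  set c : ℝ := a - r with hc
  have hc0 : 0 < c := by
    rw [hc, sub_pos]
    have : r < Real.sqrt (a ^ 2) := by
      apply Real.sqrt_lt_sqrt (by nlinarith)
      linarith
    rwa [Real.sqrt_sq (by linarith)] at this
  have hc1 : c < 1 := by
    rw [hc, sub_lt_iff_lt_add]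
    nlinarith [hr2, hr0]
  have hkey : ∀ q : ℝ, 1 - 2 * c * Real.cos q + c ^ 2 = c * (2 * (a - Real.cos q)) := by
    intro q
    have h1 : 1 + c ^ 2 = 2 * a * c := by rw [hc]; nlinarith [hr2]
    nlinarith [h1]
  have hpos : ∀ q : ℝ, 0 < 2 * (a - Real.cos q) := by
    intro q
    have := Real.cos_le_one q
    nlinarith
  have heq : ∀ q : ℝ, Real.log (2 * (a - Real.cos q))
      = Real.log (1 - 2 * c * Real.cos q + c ^ 2) - Real.log c := by
    intro q
    rw [hkey q, Real.log_mul hc0.ne' (hpos q).ne']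
    ring
  have hPcont : Continuous fun q => Real.log (1 - 2 * c * Real.cos q + c ^ 2) := by
    apply Continuous.log (by continuity)
    intro q
    rw [hkey q]
    exact (mul_pos hc0 (hpos q)).ne'
  rw [intervalIntegral.integral_congr (fun q _ => heq q),
    intervalIntegral.integral_sub (hPcont.intervalIntegrable _ _)
      intervalIntegrable_const,
    integral_log_poisson hc0.le hc1, intervalIntegral.integral_const]
  have hmul : c * (a + r) = 1 := by rw [hc]; nlinarith [hr2]
  have hlog : Real.log c = -Real.log (a + r) := by
    rw [← Real.log_inv]
    congr 1
    field_simp [hc0.ne']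
    linarith [hmul]
  rw [hlog]
  simp only [smul_eq_mul]
  ring

lemma cos_eq_one_sub_sin_sq_half (q : ℝ) : Real.cos q = 1 - 2 * Real.sin (q / 2) ^ 2 := by
  have h := Real.cos_two_mul (q / 2)
  rw [show 2 * (q / 2) = q by ring] at h
  rw [h, Real.cos_sq' (q / 2)]
  ring

lemma integral_log_sum_sq {s : ℝ} (hs : 0 < s) :
    ∫ q in (0:ℝ)..Real.pi, Real.log (4 * s ^ 2 + 4 * Real.sin (q / 2) ^ 2)
      = 2 * Real.pi * Real.arsinh s := by
  have heq : ∀ q : ℝ, 4 * s ^ 2 + 4 * Real.sin (q / 2) ^ 2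
      = 2 * ((1 + 2 * s ^ 2) - Real.cos q) := by
    intro q
    rw [cos_eq_one_sub_sin_sq_half q]
    ring
  rw [intervalIntegral.integral_congr (fun q _ => by rw [heq q]),
    integral_log_two_mul_sub_cos (by nlinarith : (1:ℝ) < 1 + 2 * s ^ 2)]
  have hss : Real.sqrt (1 + s ^ 2) ^ 2 = 1 + s ^ 2 := Real.sq_sqrt (by positivity)
  have h1 : Real.sqrt ((1 + 2 * s ^ 2) ^ 2 - 1) = 2 * s * Real.sqrt (1 + s ^ 2) := by
    rw [show (1 + 2 * s ^ 2) ^ 2 - 1 = (2 * s * Real.sqrt (1 + s ^ 2)) ^ 2 by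
      rw [mul_pow, mul_pow, hss]; ring]
    exact Real.sqrt_sq (by positivity)
  rw [h1, show 1 + 2 * s ^ 2 + 2 * s * Real.sqrt (1 + s ^ 2)
      = (s + Real.sqrt (1 + s ^ 2)) ^ 2 by nlinarith [hss]]
  rw [Real.log_pow]
  simp only [Real.arsinh]
  push_cast
  ring

lemma arsinh_eq_integral (y : ℝ) :
    Real.arsinh y = ∫ s in (0:ℝ)..1, y / Real.sqrt (1 + (s * y) ^ 2) := by
  have hd : ∀ s ∈ Set.uIcc (0:ℝ) 1, HasDerivAt (fun s => Real.arsinh (s * y))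
      (y / Real.sqrt (1 + (s * y) ^ 2)) s := by
    intro s _
    have h1 : HasDerivAt (fun s : ℝ => s * y) y s := by
      simpa using (hasDerivAt_id s).mul_const y
    have := (Real.hasDerivAt_arsinh (s * y)).comp s h1
    simpa [div_eq_inv_mul, Function.comp_def] using this
  rw [intervalIntegral.integral_eq_sub_of_hasDerivAt hd (by
    apply Continuous.intervalIntegrable
    apply Continuous.div continuous_const (by continuity)
    intro s
    positivity)]
  simp

lemma integral_sin_div_sqrt {s : ℝ} (hs0 : 0 < s) :
    ∫ t in (0:ℝ)..(Real.pi / 2), Real.sin t / Real.sqrt (1 + (s * Real.sin t) ^ 2)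
      = Real.arctan s / s := by
  have h1s : (0:ℝ) < 1 + s ^ 2 := by positivity
  have hrs : Real.sqrt (1 + s ^ 2) ^ 2 = 1 + s ^ 2 := Real.sq_sqrt h1s.le
  have hrpos : 0 < Real.sqrt (1 + s ^ 2) := Real.sqrt_pos.mpr h1s
  set F : ℝ → ℝ := fun t => -(1 / s) * Real.arcsin (s * Real.cos t / Real.sqrt (1 + s ^ 2))
    with hF
  have hd : ∀ t ∈ Set.uIcc (0:ℝ) (Real.pi / 2), HasDerivAt F
      (Real.sin t / Real.sqrt (1 + (s * Real.sin t) ^ 2)) t := by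
    intro t _
    set u : ℝ := s * Real.cos t / Real.sqrt (1 + s ^ 2) with hu
    have hub : u ^ 2 < 1 := by
      rw [hu, div_pow, hrs]
      rw [div_lt_one h1s]
      nlinarith [Real.sin_sq_add_cos_sq t, sq_nonneg (Real.sin t), sq_nonneg (s * Real.sin t), sq_nonneg s, Real.sin_sq_add_cos_sq t]
    have hu1 : u ≠ 1 := by intro h; rw [h] at hub; norm_num at hub
    have hun1 : u ≠ -1 := by intro h; rw [h] at hub; norm_num at hub
    have hinner : HasDerivAt (fun t => s * Real.cos t / Real.sqrt (1 + s ^ 2))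
        (-(s * Real.sin t) / Real.sqrt (1 + s ^ 2)) t := by
      have := ((Real.hasDerivAt_cos t).const_mul s).div_const (Real.sqrt (1 + s ^ 2))
      simpa [mul_comm] using this
    have harc := (Real.hasDerivAt_arcsin hun1 hu1).comp t hinner
    have := harc.const_mul (-(1 / s))
    refine this.congr_deriv ?_
    symm
    rw [hu]
    have h1u : Real.sqrt (1 - (s * Real.cos t / Real.sqrt (1 + s ^ 2)) ^ 2)
        = Real.sqrt (1 + (s * Real.sin t) ^ 2) / Real.sqrt (1 + s ^ 2) := by
      rw [eq_div_iff hrpos.ne', ← Real.sqrt_mul (by nlinarith) ]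
      congr 1
      have := Real.sin_sq_add_cos_sq t
      field_simp
      linear_combination s ^ 2 * (1 - Real.sin t ^ 2) * hrs - (1 + s ^ 2) * s ^ 2 * this
    rw [h1u]
    have hsq : 0 < Real.sqrt (1 + (s * Real.sin t) ^ 2) := Real.sqrt_pos.mpr (by positivity)
    field_simp
  rw [intervalIntegral.integral_eq_sub_of_hasDerivAt hd (by
    apply Continuous.intervalIntegrable
    apply Continuous.div (by continuity) (by continuity)
    intro t
    positivity)]
  rw [hF]
  simp only [Real.cos_pi_div_two, Real.cos_zero, mul_zero, zero_div, Real.arcsin_zero, mul_one]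
  rw [Real.arctan_eq_arcsin]
  field_simp
  ring

lemma summable_catalan : Summable (fun k : ℕ => (-1 : ℝ) ^ k / (2 * (k : ℝ) + 1) ^ 2) := by
  apply Summable.of_abs
  have h2 : Summable (fun k : ℕ => (1:ℝ) / ((k : ℝ) + 1) ^ 2) := by
    have := (summable_nat_add_iff (f := fun n : ℕ => (1:ℝ) / (n : ℝ) ^ 2) 1).mpr
      ((Real.summable_one_div_nat_pow (p := 2)).mpr one_lt_two)
    simpa using this
  apply Summable.of_nonneg_of_le (fun k => abs_nonneg _) _ h2
  intro k
  have hk : (0:ℝ) < (k:ℝ) + 1 := by positivity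
  have hk2 : (0:ℝ) < 2 * (k:ℝ) + 1 := by positivity
  rw [abs_div, abs_pow, abs_neg, abs_one, one_pow, abs_of_nonneg (by positivity : (0:ℝ) ≤ (2 * (k:ℝ) + 1) ^ 2)]
  apply div_le_div_of_nonneg_left one_pos.le (by positivity)
  nlinarith

lemma integral_arctan_div : ∫ s in (0:ℝ)..1, Real.arctan s / s = catalan' := by
  set P : ℕ → ℝ → ℝ := fun n s => ∑ k ∈ Finset.range n, (-1:ℝ) ^ k * s ^ (2 * k) / (2 * k + 1)
    with hP
  -- geometric representation and bound
  have hbound : ∀ n : ℕ, ∀ s ∈ Set.Ioc (0:ℝ) 1, |P n s| ≤ 2 := by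
    intro n s hs
    have hrep : P n s = ∫ u in (0:ℝ)..1, ∑ k ∈ Finset.range n, (-(s * u) ^ 2) ^ k := by
      rw [intervalIntegral.integral_finset_sum (fun k _ => by
        apply Continuous.intervalIntegrable; continuity)]
      refine Finset.sum_congr rfl fun k _ => ?_
      have : ∀ u : ℝ, (-(s * u) ^ 2) ^ k = ((-1:ℝ) ^ k * s ^ (2 * k)) * u ^ (2 * k) := by
        intro u
        rw [neg_pow, mul_pow, pow_mul, pow_mul]
        ring
      simp_rw [this]
      rw [intervalIntegral.integral_const_mul, integral_pow]
      push_cast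
      ring
    rw [hrep, ← Real.norm_eq_abs]
    have := intervalIntegral.norm_integral_le_of_norm_le_const
      (a := (0:ℝ)) (b := 1) (C := 2)
      (f := fun u => ∑ k ∈ Finset.range n, (-(s * u) ^ 2) ^ k) ?_
    · simpa using this
    · intro u hu
      rw [Set.uIoc_of_le (by norm_num : (0:ℝ) ≤ 1)] at hu
      have hsu : (s * u) ^ 2 ≤ 1 := by
        have h1 : 0 < s := hs.1
        have h2 : s ≤ 1 := hs.2
        have h3 : 0 < u := hu.1
        have h4 : u ≤ 1 := hu.2
        have h5 : s * u ≤ 1 := by nlinarith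
        nlinarith [mul_pos h1 h3]
      have hne : -(s * u) ^ 2 ≠ 1 := by nlinarith [sq_nonneg (s * u)]
      show ‖∑ k ∈ Finset.range n, (-(s * u) ^ 2) ^ k‖ ≤ 2
      rw [geom_sum_eq hne]
      rw [Real.norm_eq_abs, abs_div]
      have hden : 1 + (s * u) ^ 2 ≥ 1 := by nlinarith [sq_nonneg (s * u)]
      have habs_den : |(-(s * u) ^ 2 - 1)| = 1 + (s * u) ^ 2 := by
        rw [abs_of_nonpos (by nlinarith [sq_nonneg (s * u)])]
        ring
      have habs_num : |(-(s * u) ^ 2) ^ n - 1| ≤ 2 := by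
        have h1 : |(-(s * u) ^ 2) ^ n| ≤ 1 := by
          rw [abs_pow, abs_neg, abs_of_nonneg (sq_nonneg _)]
          exact pow_le_one₀ (sq_nonneg _) hsu
        calc |(-(s * u) ^ 2) ^ n - 1| ≤ |(-(s * u) ^ 2) ^ n| + 1 := by
              exact (abs_sub _ _).trans (by simp)
          _ ≤ 2 := by linarith
      rw [habs_den]
      calc |(-(s * u) ^ 2) ^ n - 1| / (1 + (s * u) ^ 2) ≤ 2 / 1 :=
            div_le_div₀ (by norm_num) habs_num one_pos hden
          _ = 2 := by norm_num
  -- pointwise convergence for s ∈ (0,1)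
  have hconv : ∀ s ∈ Set.Ioo (0:ℝ) 1, Tendsto (fun n => P n s) atTop
      (nhds (Real.arctan s / s)) := by
    intro s hs
    have hsum := (Real.hasSum_arctan (x := s) (by
      rw [Real.norm_eq_abs, abs_of_pos hs.1]; exact hs.2)).div_const s
    have hsum' : HasSum (fun k : ℕ => (-1:ℝ) ^ k * s ^ (2 * k) / (2 * k + 1))
        (Real.arctan s / s) := by
      refine hsum.congr_fun fun k => ?_
      rw [pow_succ]
      field_simp [hs.1.ne']
      push_cast
      ring
    exact hsum'.tendsto_sum_nat
  -- integral of partial sums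
  have hint : ∀ n : ℕ, ∫ s in (0:ℝ)..1, P n s
      = ∑ k ∈ Finset.range n, (-1:ℝ) ^ k / (2 * (k:ℝ) + 1) ^ 2 := by
    intro n
    rw [hP]
    simp only
    rw [intervalIntegral.integral_finset_sum (fun k _ => by
      apply Continuous.intervalIntegrable; continuity)]
    refine Finset.sum_congr rfl fun k _ => ?_
    simp_rw [div_eq_mul_inv, intervalIntegral.integral_mul_const,
      intervalIntegral.integral_const_mul, integral_pow]
    push_cast
    have : (2:ℝ) * (k:ℝ) + 1 ≠ 0 := by positivity
    field_simp
    ring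
  have hlim1 : Tendsto (fun n => ∫ s in (0:ℝ)..1, P n s) atTop (nhds catalan') := by
    simp_rw [hint]
    exact (summable_catalan.hasSum).tendsto_sum_nat
  have hlim2 : Tendsto (fun n => ∫ s in (0:ℝ)..1, P n s) atTop
      (nhds (∫ s in (0:ℝ)..1, Real.arctan s / s)) := by
    apply intervalIntegral.tendsto_integral_filter_of_dominated_convergence (fun _ => 2)
    · filter_upwards with n
      apply Continuous.aestronglyMeasurable
      rw [hP]
      simp only
      continuity
    · filter_upwards with n
      filter_upwards with s hsmem
      rw [Set.uIoc_of_le (by norm_num : (0:ℝ) ≤ 1)] at hsmem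
      rw [Real.norm_eq_abs]
      exact hbound n s hsmem
    · exact intervalIntegrable_const
    · have h1 : ∀ᵐ s : ℝ ∂volume, s ≠ 1 := by
        refine (MeasureTheory.ae_iff).mpr ?_
        simp only [not_not]
        exact measure_mono_null (fun x hx => hx) (Real.volume_singleton)
      filter_upwards [h1] with s hs1 hsmem
      rw [Set.uIoc_of_le (by norm_num : (0:ℝ) ≤ 1)] at hsmem
      exact hconv s ⟨hsmem.1, lt_of_le_of_ne hsmem.2 hs1⟩
  exact tendsto_nhds_unique hlim2 hlim1

lemma integral_arsinh_sin :
    ∫ t in (0:ℝ)..(Real.pi / 2), Real.arsinh (Real.sin t) = catalan' := by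
  have hpi2 : (0:ℝ) ≤ Real.pi / 2 := by positivity
  set g : ℝ → ℝ → ℝ := fun t s => Real.sin t / Real.sqrt (1 + (s * Real.sin t) ^ 2) with hg
  have hgcont : Continuous (Function.uncurry g) := by
    apply Continuous.div (by fun_prop)
    · apply Real.continuous_sqrt.comp
      fun_prop
    · intro p
      positivity
  have step1 : ∫ t in (0:ℝ)..(Real.pi / 2), Real.arsinh (Real.sin t)
      = ∫ t in (0:ℝ)..(Real.pi / 2), ∫ s in (0:ℝ)..1, g t s := by
    refine intervalIntegral.integral_congr fun t _ => ?_
    exact arsinh_eq_integral (Real.sin t)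
  have hint : Integrable (Function.uncurry g)
      ((volume.restrict (Set.Ioc (0:ℝ) (Real.pi / 2))).prod (volume.restrict (Set.Ioc (0:ℝ) 1))) := by
    rw [MeasureTheory.Measure.prod_restrict, ← MeasureTheory.Measure.volume_eq_prod]
    have hcompact : IsCompact (Set.Icc (0:ℝ) (Real.pi / 2) ×ˢ Set.Icc (0:ℝ) 1) :=
      isCompact_Icc.prod isCompact_Icc
    have hIcc : IntegrableOn (Function.uncurry g)
        (Set.Icc (0:ℝ) (Real.pi / 2) ×ˢ Set.Icc (0:ℝ) 1) volume :=
      ContinuousOn.integrableOn_compact hcompact hgcont.continuousOn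
    exact hIcc.mono_set (Set.prod_mono Set.Ioc_subset_Icc_self Set.Ioc_subset_Icc_self)
  have step2 : ∫ t in (0:ℝ)..(Real.pi / 2), ∫ s in (0:ℝ)..1, g t s
      = ∫ s in Set.Ioc (0:ℝ) 1, ∫ t in Set.Ioc (0:ℝ) (Real.pi / 2), g t s := by
    rw [intervalIntegral.integral_of_le hpi2]
    simp_rw [intervalIntegral.integral_of_le (by norm_num : (0:ℝ) ≤ 1)]
    exact MeasureTheory.integral_integral_swap hint
  have step3 : ∫ s in Set.Ioc (0:ℝ) 1, ∫ t in Set.Ioc (0:ℝ) (Real.pi / 2), g t s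
      = ∫ s in Set.Ioc (0:ℝ) 1, Real.arctan s / s := by
    refine MeasureTheory.setIntegral_congr_fun measurableSet_Ioc fun s hs => ?_
    rw [← intervalIntegral.integral_of_le hpi2]
    exact integral_sin_div_sqrt hs.1
  rw [step1, step2, step3, ← intervalIntegral.integral_of_le (by norm_num : (0:ℝ) ≤ 1),
    integral_arctan_div]


/-- `∫₀^π ∫₀^π π⁻² ln(4 sin²(q₁/2) + 4 sin²(q₂/2)) dq₁ dq₂ = 4G/π` with `G` Catalan's
constant. -/
theorem U2_at_zero :
    ∫ q1 in (0:ℝ)..Real.pi, ∫ q2 in (0:ℝ)..Real.pi,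
        (1 / Real.pi ^ 2) * Real.log (4 * Real.sin (q1 / 2) ^ 2 + 4 * Real.sin (q2 / 2) ^ 2)
      = 4 * catalan' / Real.pi := by
  have hpi : (0:ℝ) < Real.pi := Real.pi_pos
  have key : ∀ q1 ∈ Set.Ioc (0:ℝ) Real.pi,
      (∫ q2 in (0:ℝ)..Real.pi,
        (1 / Real.pi ^ 2) * Real.log (4 * Real.sin (q1 / 2) ^ 2 + 4 * Real.sin (q2 / 2) ^ 2))
      = (1 / Real.pi ^ 2) * (2 * Real.pi * Real.arsinh (Real.sin (q1 / 2))) := by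
    intro q1 hq1
    rw [intervalIntegral.integral_const_mul,
      integral_log_sum_sq (Real.sin_pos_of_pos_of_lt_pi (by linarith [hq1.1])
        (by linarith [hq1.2, hpi]))]
  rw [intervalIntegral.integral_of_le hpi.le,
    MeasureTheory.setIntegral_congr_fun measurableSet_Ioc key,
    ← intervalIntegral.integral_of_le hpi.le]
  simp_rw [show ∀ x : ℝ, (1 / Real.pi ^ 2) * (2 * Real.pi * x) = (2 / Real.pi) * x from
    fun x => by field_simp]
  rw [intervalIntegral.integral_const_mul]
  have h3 := intervalIntegral.integral_comp_div (a := (0:ℝ)) (b := Real.pi)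
    (fun t => Real.arsinh (Real.sin t)) (two_ne_zero)
  simp only [zero_div] at h3
  rw [h3, integral_arsinh_sin]
  field_simp
  ring
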